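/- Let σ : [t1,t2] → ℝ² be an arc-length parametrized C¹, piecewise C² curve with ‖σ''‖ ≤ 1/r (r > 0) and ‖σ(t1) − σ(t2)‖ < 2r. Let D1, D2 be the two closed disks of radius r with σ(t1), σ(t2) ∈ ∂D1 ∩ ∂D2. If the image of σ is contained in D1 ∪ D2, then σ([t1,t2]) has no point in int(D1 ∪ D2) \ cl(D1 ∩ D2). -/

import Mathlib

set_option maxHeartbeats 1000000

open Set Metric

variable {E : Type*} [NormedAddCommGroup E] [InnerProductSpace ℝ E]

local notation "⟪" x ", " y "⟫" => @inner ℝ _ _ x y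


/-- One-step lower bound for the increment of `φ t = ⟪v t, σ t - c⟫`. -/
theorem phi_step (r a b : ℝ) (hr : 0 < r) (σ v : ℝ → E) (c : E)
    (hd : ∀ t ∈ Icc a b, HasDerivAt σ (v t) t)
    (hu : ∀ t ∈ Icc a b, ‖v t‖ = 1)
    (hcont : ContinuousOn v (Icc a b))
    (hl : ∀ s ∈ Icc a b, ∀ t ∈ Icc a b, ‖v s - v t‖ ≤ (1/r) * |s - t|)
    (hb : ∀ t ∈ Icc a b, ‖σ t - c‖ ≤ r)
    {s t : ℝ} (hs : s ∈ Icc a b) (ht : t ∈ Icc a b) (hst : s ≤ t) :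
    ⟪v s, σ s - c⟫ - ⟪v t, σ t - c⟫ ≤ (t - s)^3 / (6 * r^2) := by
  have hsub : Icc s t ⊆ Icc a b := Icc_subset_Icc hs.1 ht.2
  -- FTC : ⟪v s, σ t - σ s⟫ = ∫ u in s..t, ⟪v s, v u⟫
  have hftc : (∫ u in s..t, ⟪v s, v u⟫) = ⟪v s, σ t⟫ - ⟪v s, σ s⟫ := by
    apply intervalIntegral.integral_eq_sub_of_hasDerivAt
    · intro u hu'
      rw [uIcc_of_le hst] at hu'
      have := (hd u (hsub hu'))
      simpa using (hasDerivAt_const u (v s)).inner ℝ this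
    · apply ContinuousOn.intervalIntegrable
      rw [uIcc_of_le hst]
      exact (continuousOn_const.inner (hcont.mono hsub))
  -- pointwise lower bound on the integrand
  have hpt : ∀ u ∈ Icc s t, 1 - (u - s)^2/(2*r^2) ≤ ⟪v s, v u⟫ := by
    intro u hu'
    have h1 : ‖v s - v u‖ ≤ (1/r) * |s - u| := hl s hs u (hsub hu')
    have h2 : ‖v s - v u‖^2 = ‖v s‖^2 - 2*⟪v s, v u⟫ + ‖v u‖^2 := norm_sub_sq_real _ _
    rw [hu s hs, hu u (hsub hu')] at h2
    have h3 : ‖v s - v u‖^2 ≤ ((1/r) * |s - u|)^2 := by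
      have := norm_nonneg (v s - v u); nlinarith
    have habs : |s - u| = u - s := by rw [abs_sub_comm]; exact abs_of_nonneg (by linarith [hu'.1])
    rw [habs] at h3
    have hr2 : (0:ℝ) < r^2 := by positivity
    rw [h2] at h3
    have e : (1/r*(u-s))^2 * r^2 = (u-s)^2 := by field_simp
    have h6 : (1^2 - 2*⟪v s, v u⟫ + 1^2) * r^2 ≤ (u-s)^2 := by
      calc (1^2 - 2*⟪v s, v u⟫ + 1^2) * r^2 ≤ (1/r*(u-s))^2 * r^2 :=
            mul_le_mul_of_nonneg_right h3 hr2.le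
        _ = (u-s)^2 := e
    have h7 : 1 - ⟪v s, v u⟫ ≤ (u - s)^2/(2*r^2) := by
      rw [le_div_iff₀ (by positivity : (0:ℝ) < 2*r^2)]; nlinarith
    linarith
  -- integral lower bound
  have hint1 : IntervalIntegrable (fun u => 1 - (u - s)^2/(2*r^2)) MeasureTheory.volume s t := by
    apply Continuous.intervalIntegrable; fun_prop
  have hint2 : IntervalIntegrable (fun u => ⟪v s, v u⟫) MeasureTheory.volume s t := by
    apply ContinuousOn.intervalIntegrable
    rw [uIcc_of_le hst]
    exact (continuousOn_const.inner (hcont.mono hsub))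
  have hmono := intervalIntegral.integral_mono_on hst hint1 hint2 hpt
  -- compute the lower integral
  have hcomp : (∫ u in s..t, (1 - (u - s)^2/(2*r^2))) = (t - s) - (t-s)^3/(6*r^2) := by
    have : ∀ u ∈ uIcc s t, HasDerivAt (fun u => u - (u-s)^3/(6*r^2))
        (1 - (u - s)^2/(2*r^2)) u := by
      intro u _
      have h1 : HasDerivAt (fun u : ℝ => u - s) 1 u := (hasDerivAt_id u).sub_const s
      have h2 : HasDerivAt (fun u : ℝ => (u-s)^3) (3*(u-s)^2 * 1) u := by
        simpa using (h1.fun_pow 3)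
      have h3 : HasDerivAt (fun u : ℝ => (u-s)^3/(6*r^2)) (3*(u-s)^2*1/(6*r^2)) u :=
        h2.div_const _
      have := (hasDerivAt_id u).sub h3
      refine this.congr_deriv ?_
      ring
    rw [intervalIntegral.integral_eq_sub_of_hasDerivAt this (by
      apply Continuous.intervalIntegrable; fun_prop)]
    show t - (t-s)^3/(6*r^2) - (s - (s-s)^3/(6*r^2)) = _
    ring
  -- term 1 bound
  have hT1 : |⟪v t - v s, σ t - c⟫| ≤ t - s := by
    calc |⟪v t - v s, σ t - c⟫| ≤ ‖v t - v s‖ * ‖σ t - c‖ := abs_real_inner_le_norm _ _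
    _ ≤ ((1/r) * |t - s|) * r := by
        apply mul_le_mul (hl t ht s hs) (hb t ht) (norm_nonneg _)
        positivity
    _ = |t - s| := by field_simp
    _ = t - s := abs_of_nonneg (by linarith)
  -- assemble
  have hdecomp : ⟪v t, σ t - c⟫ - ⟪v s, σ s - c⟫
      = ⟪v t - v s, σ t - c⟫ + (⟪v s, σ t⟫ - ⟪v s, σ s⟫) := by
    rw [inner_sub_left]
    have : ⟪v s, σ t - c⟫ - ⟪v s, σ s - c⟫ = ⟪v s, σ t⟫ - ⟪v s, σ s⟫ := by
      rw [inner_sub_right, inner_sub_right]; ring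
    linarith
  rw [← hftc] at hdecomp
  rw [hcomp] at hmono
  have := abs_le.1 hT1
  linarith [this.1, this.2]


theorem phi_mono (r a b : ℝ) (hr : 0 < r) (φ : ℝ → ℝ)
    (hstep : ∀ s ∈ Icc a b, ∀ t ∈ Icc a b, s ≤ t → φ s - φ t ≤ (t - s)^3 / (6 * r^2)) :
    MonotoneOn φ (Icc a b) := by
  intro s hs t ht hst
  by_contra hcon
  push_neg at hcon
  set ε := φ s - φ t with hε
  have hεpos : 0 < ε := by simp [hε]; linarith
  have hslt : s < t := lt_of_le_of_ne hst (by rintro rfl; simp [hε] at hεpos)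
  -- subdivision bound : for every n ≥ 1, ε ≤ (t-s)^3/(6r²n²)
  have key : ∀ n : ℕ, 0 < n → ε ≤ (t - s)^3 / (6 * r^2 * n^2) := by
    intro n hn
    set δ := (t - s) / n with hδ
    have hnpos : (0:ℝ) < n := by exact_mod_cast hn
    have hδpos : 0 < δ := div_pos (by linarith) hnpos
    set x : ℕ → ℝ := fun i => s + i * δ with hx
    have hmem : ∀ i : ℕ, i ≤ n → x i ∈ Icc a b := by
      intro i hi
      have hi' : (i:ℝ) ≤ n := by exact_mod_cast hi
      constructor
      · have : s ≤ x i := by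
          simp only [hx]; nlinarith
        linarith [hs.1]
      · have : x i ≤ t := by
          simp only [hx, hδ]
          have : (i:ℝ) * ((t-s)/n) ≤ n * ((t-s)/n) := by
            apply mul_le_mul_of_nonneg_right hi'; positivity
          have h2 : (n:ℝ) * ((t-s)/n) = t - s := by field_simp
          linarith
        linarith [ht.2]
    have hsum : ∑ i ∈ Finset.range n, (φ (x i) - φ (x (i+1))) = φ s - φ t := by
      have := Finset.sum_range_sub (fun i => φ (x i)) n
      have h0 : x 0 = s := by simp [hx]
      have hn' : x n = t := by simp only [hx, hδ]; field_simp; ring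
      have : ∑ i ∈ Finset.range n, (φ (x (i+1)) - φ (x i)) = φ t - φ s := by
        rw [Finset.sum_range_sub (fun i => φ (x i))]; rw [h0, hn']
      calc ∑ i ∈ Finset.range n, (φ (x i) - φ (x (i+1)))
          = - ∑ i ∈ Finset.range n, (φ (x (i+1)) - φ (x i)) := by
            rw [← Finset.sum_neg_distrib]; apply Finset.sum_congr rfl; intros; ring
        _ = φ s - φ t := by rw [this]; ring
    have hterm : ∀ i ∈ Finset.range n, φ (x i) - φ (x (i+1)) ≤ δ^3 / (6*r^2) := by
      intro i hi
      have hi' := Finset.mem_range.1 hi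
      have h1 := hmem i (le_of_lt hi')
      have h2 := hmem (i+1) hi'
      have hle : x i ≤ x (i+1) := by
        simp only [hx]; push_cast; nlinarith
      have := hstep (x i) h1 (x (i+1)) h2 hle
      have hdiff : x (i+1) - x i = δ := by simp only [hx]; push_cast; ring
      rwa [hdiff] at this
    have := Finset.sum_le_sum hterm
    rw [hsum] at this
    simp only [Finset.sum_const, Finset.card_range, nsmul_eq_mul] at this
    have hδ3 : (n:ℝ) * (δ^3/(6*r^2)) = (t-s)^3/(6*r^2*n^2) := by
      simp only [hδ]; field_simp
    rw [hδ3] at this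
    linarith
  -- choose n large
  obtain ⟨n, hn⟩ := exists_nat_gt (max 1 ((t-s)^3/(6*r^2*ε)))
  have hn1 : (1:ℝ) < n := lt_of_le_of_lt (le_max_left _ _) hn
  have hnn : 0 < n := by exact_mod_cast lt_trans zero_lt_one hn1
  have h1 := key n hnn
  have hnr : (t-s)^3/(6*r^2*ε) < n := lt_of_le_of_lt (le_max_right _ _) hn
  have hnpos : (0:ℝ) < n := by exact_mod_cast hnn
  have h2 : (t-s)^3/(6*r^2*(n:ℝ)^2) < ε := by
    rw [div_lt_iff₀ (by positivity)]
    rw [div_lt_iff₀ (by positivity)] at hnr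
    have hnn2 : (0:ℝ) ≤ (n:ℝ)^2 - n := by nlinarith [hn1]
    have hsq : (n:ℝ) * (6*r^2*ε) ≤ ε * (6*r^2*(n:ℝ)^2) := by
      nlinarith [mul_nonneg (mul_nonneg (by positivity : (0:ℝ) ≤ 6*r^2) hεpos.le) hnn2]
    linarith
  linarith

/-- convexity of squared distance to a center, for curves confined to a radius-r ball. -/
theorem sq_dist_convex (r a b : ℝ) (hr : 0 < r) (σ v : ℝ → E) (c : E)
    (hd : ∀ t ∈ Icc a b, HasDerivAt σ (v t) t)
    (hu : ∀ t ∈ Icc a b, ‖v t‖ = 1)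
    (hcont : ContinuousOn v (Icc a b))
    (hl : ∀ s ∈ Icc a b, ∀ t ∈ Icc a b, ‖v s - v t‖ ≤ (1/r) * |s - t|)
    (hb : ∀ t ∈ Icc a b, ‖σ t - c‖ ≤ r) :
    ConvexOn ℝ (Icc a b) (fun t => ‖σ t - c‖^2) := by
  have hφmono : MonotoneOn (fun t => ⟪v t, σ t - c⟫) (Icc a b) :=
    phi_mono r a b hr _ (fun s hs t ht hst => phi_step r a b hr σ v c hd hu hcont hl hb hs ht hst)
  have hder : ∀ t ∈ Icc a b, HasDerivAt (fun t => ‖σ t - c‖^2) (2*⟪v t, σ t - c⟫) t := by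
    intro t ht
    have h1 : HasDerivAt (fun t => σ t - c) (v t) t := (hd t ht).sub_const c
    have h2 := h1.inner ℝ h1
    have h3 : (fun t => ⟪σ t - c, σ t - c⟫) = (fun t => ‖σ t - c‖^2) := by
      funext u; exact real_inner_self_eq_norm_sq _
    rw [h3] at h2
    refine h2.congr_deriv ?_
    rw [real_inner_comm]; ring
  apply MonotoneOn.convexOn_of_deriv (convex_Icc a b)
  · intro t ht; exact (hder t ht).continuousAt.continuousWithinAt
  · intro t ht
    exact ((hder t (interior_subset ht)).differentiableAt).differentiableWithinAt
  · intro x hx y hy hxy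
    rw [interior_Icc] at hx hy
    rw [(hder x (Ioo_subset_Icc_self hx)).deriv, (hder y (Ioo_subset_Icc_self hy)).deriv]
    have := hφmono (Ioo_subset_Icc_self hx) (Ioo_subset_Icc_self hy) hxy
    linarith

/-- a convex function on Icc is below the max of its endpoint values -/
theorem convex_le_max (a b M : ℝ) (f : ℝ → ℝ) (hf : ConvexOn ℝ (Icc a b) f)
    (hab : a ≤ b) (ha : f a ≤ M) (hb : f b ≤ M) : ∀ t ∈ Icc a b, f t ≤ M := by
  intro t ht
  have := hf.le_on_segment (left_mem_Icc.2 hab) (right_mem_Icc.2 hab)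
    (by rwa [segment_eq_Icc hab])
  exact le_trans this (max_le ha hb)

/-- strict version in the interior, given one strict interior value -/
theorem convex_lt_inner (a b M t0 : ℝ) (f : ℝ → ℝ) (hf : ConvexOn ℝ (Icc a b) f)
    (ha : a ≤ t0) (hb : t0 ≤ b) (hfa : f a ≤ M) (hfb : f b ≤ M) (hft0 : f t0 < M) :
    ∀ t ∈ Ioo a b, f t < M := by
  intro t ht
  rcases le_or_gt t t0 with h | h
  · -- t ∈ (a, t0], combination of a and t0
    have ht0a : a < t0 := lt_of_lt_of_le ht.1 h
    obtain ⟨lam, mu, hlam, hmu, hsum, hcomb⟩ :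
        ∃ lam mu : ℝ, 0 ≤ lam ∧ 0 < mu ∧ lam + mu = 1 ∧ lam * a + mu * t0 = t := by
      have hne : t0 - a ≠ 0 := by linarith
      refine ⟨(t0 - t)/(t0 - a), (t - a)/(t0 - a), div_nonneg (by linarith) (by linarith),
        div_pos (by linarith [ht.1]) (by linarith), by field_simp; ring, by field_simp; ring⟩
    have := hf.2 (left_mem_Icc.2 (le_trans ha hb)) ⟨ha, hb⟩ hlam hmu.le hsum
    rw [smul_eq_mul, smul_eq_mul, smul_eq_mul, smul_eq_mul, hcomb] at this
    have hMM : lam*M + mu*M = M := by rw [← add_mul, hsum, one_mul]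
    nlinarith [mul_le_mul_of_nonneg_left hfa hlam, mul_lt_mul_of_pos_left hft0 hmu]
  · have ht0b : t0 < b := lt_of_le_of_lt h.le ht.2
    obtain ⟨lam, mu, hlam, hmu, hsum, hcomb⟩ :
        ∃ lam mu : ℝ, 0 < lam ∧ 0 ≤ mu ∧ lam + mu = 1 ∧ lam * t0 + mu * b = t := by
      have hne : b - t0 ≠ 0 := by linarith
      refine ⟨(b - t)/(b - t0), (t - t0)/(b - t0), div_pos (by linarith [ht.2]) (by linarith),
        div_nonneg (by linarith) (by linarith), by field_simp; ring, by field_simp; ring⟩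
    have := hf.2 ⟨ha, hb⟩ (right_mem_Icc.2 (le_trans ha hb)) hlam.le hmu hsum
    rw [smul_eq_mul, smul_eq_mul, smul_eq_mul, smul_eq_mul, hcomb] at this
    have hMM : lam*M + mu*M = M := by rw [← add_mul, hsum, one_mul]
    nlinarith [mul_lt_mul_of_pos_left hft0 hlam, mul_le_mul_of_nonneg_left hfb hmu]


theorem comb_norm_sq (p q : E) (s : ℝ) :
    ‖(1-s)•p + s•q‖^2 = (1-s)*‖p‖^2 + s*‖q‖^2 - s*(1-s)*‖q - p‖^2 := by
  have h1 : ‖(1-s)•p + s•q‖^2 = ‖(1-s)•p‖^2 + 2*⟪(1-s)•p, s•q⟫ + ‖s•q‖^2 :=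
    norm_add_sq_real _ _
  have h2 : ‖q - p‖^2 = ‖q‖^2 - 2*⟪q, p⟫ + ‖p‖^2 := norm_sub_sq_real _ _
  have h3 : ⟪(1-s)•p, s•q⟫ = (1-s)*(s*⟪p, q⟫) := by
    rw [real_inner_smul_left, real_inner_smul_right]
  have h4 : ‖(1-s)•p‖^2 = (1-s)^2*‖p‖^2 := by
    rw [norm_smul]; simp [mul_pow, sq_abs]
  have h5 : ‖s•q‖^2 = s^2*‖q‖^2 := by
    rw [norm_smul]; simp [mul_pow, sq_abs]
  have h6 : ⟪q, p⟫ = ⟪p, q⟫ := real_inner_comm _ _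
  rw [h1, h3, h4, h5]
  rw [h6] at h2
  nlinarith [h2]

theorem comb_identity (c c' x : E) (s : ℝ) :
    ‖x - ((1-s)•c + s•c')‖^2
      = (1-s)*‖x-c‖^2 + s*‖x-c'‖^2 - s*(1-s)*‖c-c'‖^2 := by
  have h1 : x - ((1-s)•c + s•c') = (1-s)•(x-c) + s•(x-c') := by
    module
  have h2 : c - c' = (x - c') - (x - c) := by abel
  rw [h1, h2]
  exact comb_norm_sq (x-c) (x-c') s

theorem core_lemma {r t1 t2 : ℝ} (hr : 0 < r) (σ v : ℝ → E) {c c' : E} (hcc : c ≠ c')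
    (hd : ∀ t ∈ Icc t1 t2, HasDerivAt σ (v t) t)
    (hu : ∀ t ∈ Icc t1 t2, ‖v t‖ = 1)
    (hcont : ContinuousOn v (Icc t1 t2))
    (hl : ∀ s ∈ Icc t1 t2, ∀ t ∈ Icc t1 t2, ‖v s - v t‖ ≤ (1/r) * |s - t|)
    (he1 : dist (σ t1) c' ≤ r) (he2 : dist (σ t2) c' ≤ r)
    (hin : ∀ t ∈ Icc t1 t2, σ t ∈ closedBall c r ∪ closedBall c' r)
    {t0 : ℝ} (ht0 : t0 ∈ Icc t1 t2)
    (hlt : dist (σ t0) c < r) (hgt : r < dist (σ t0) c') : False := by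
  set d : ℝ := ‖c - c'‖ with hd_def
  have hd0 : 0 < d := by
    simp only [hd_def, norm_pos_iff, sub_ne_zero]; exact hcc
  have hσc : ContinuousOn σ (Icc t1 t2) := fun t ht =>
    (hd t ht).continuousAt.continuousWithinAt
  -- the exit time a
  set A : Set ℝ := {t | t ∈ Icc t1 t0 ∧ dist (σ t) c' ≤ r} with hA_def
  have hA_closed : IsClosed A := by
    have : A = Icc t1 t0 ∩ σ ⁻¹' (closedBall c' r) := by
      ext t; simp [hA_def, mem_closedBall]
    rw [this]
    exact ContinuousOn.preimage_isClosed_of_isClosed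
      (hσc.mono (Icc_subset_Icc le_rfl ht0.2)) isClosed_Icc Metric.isClosed_closedBall
  have hA_ne : A.Nonempty := ⟨t1, ⟨le_rfl, ht0.1⟩, he1⟩
  have hA_bdd : BddAbove A := ⟨t0, fun t ht => ht.1.2⟩
  set a : ℝ := sSup A with ha_def
  have haA : a ∈ A := hA_closed.csSup_mem hA_ne hA_bdd
  have ha1 : t1 ≤ a := haA.1.1
  have hat0 : a ≤ t0 := haA.1.2
  have halt : a < t0 := lt_of_le_of_ne hat0 (fun h => absurd (h ▸ haA.2) (not_le.2 hgt))
  have hgap1 : ∀ t, a < t → t ≤ t0 → r < dist (σ t) c' := by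
    intro t hta htt0
    by_contra hcon
    push_neg at hcon
    exact absurd (le_csSup hA_bdd ⟨⟨le_trans ha1 hta.le, htt0⟩, hcon⟩) (not_le.2 hta)
  -- the re-entry time b
  set B : Set ℝ := {t | t ∈ Icc t0 t2 ∧ dist (σ t) c' ≤ r} with hB_def
  have hB_closed : IsClosed B := by
    have : B = Icc t0 t2 ∩ σ ⁻¹' (closedBall c' r) := by
      ext t; simp [hB_def, mem_closedBall]
    rw [this]
    exact ContinuousOn.preimage_isClosed_of_isClosed
      (hσc.mono (Icc_subset_Icc ht0.1 le_rfl)) isClosed_Icc Metric.isClosed_closedBall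
  have hB_ne : B.Nonempty := ⟨t2, ⟨ht0.2, le_rfl⟩, he2⟩
  have hB_bdd : BddBelow B := ⟨t0, fun t ht => ht.1.1⟩
  set b : ℝ := sInf B with hb_def
  have hbB : b ∈ B := hB_closed.csInf_mem hB_ne hB_bdd
  have hb2 : b ≤ t2 := hbB.1.2
  have ht0b : t0 ≤ b := hbB.1.1
  have hbt0 : t0 < b := lt_of_le_of_ne ht0b (fun h => absurd (h ▸ hbB.2) (not_le.2 hgt))
  have hgap2 : ∀ t, t0 ≤ t → t < b → r < dist (σ t) c' := by
    intro t htt0 htb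
    by_contra hcon
    push_neg at hcon
    exact absurd (csInf_le hB_bdd ⟨⟨htt0, le_trans htb.le hb2⟩, hcon⟩) (not_le.2 htb)
  have hab : a < b := lt_trans halt hbt0
  have hsub : Icc a b ⊆ Icc t1 t2 := Icc_subset_Icc ha1 hb2
  -- on the open interval the curve is strictly outside ball c'
  have hout : ∀ t ∈ Ioo a b, r < dist (σ t) c' := by
    intro t ht
    rcases le_or_gt t t0 with h | h
    · exact hgap1 t ht.1 h
    · exact hgap2 t h.le ht.2
  -- hence inside closed ball c on all of [a,b] (closure trick)
  have hgb : ∀ t ∈ Icc a b, dist (σ t) c ≤ r := by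
    have hCclosed : IsClosed (Icc a b ∩ σ ⁻¹' (closedBall c r)) :=
      ContinuousOn.preimage_isClosed_of_isClosed
        (hσc.mono hsub) isClosed_Icc Metric.isClosed_closedBall
    have hIoo : Ioo a b ⊆ Icc a b ∩ σ ⁻¹' (closedBall c r) := by
      intro t ht
      refine ⟨Ioo_subset_Icc_self ht, ?_⟩
      rcases hin t (hsub (Ioo_subset_Icc_self ht)) with h | h
      · exact h
      · exact absurd (mem_closedBall.1 h) (not_le.2 (hout t ht))
    have := closure_minimal hIoo hCclosed
    rw [closure_Ioo hab.ne] at this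
    intro t ht
    exact (this ht).2
  -- σ a and σ b are exactly on the circle around c'
  have h_eq_a : dist (σ a) c' = r := by
    refine le_antisymm haA.2 ?_
    have hCclosed : IsClosed (Icc a t0 ∩ σ ⁻¹' ((Metric.ball c' r)ᶜ)) :=
      ContinuousOn.preimage_isClosed_of_isClosed
        (hσc.mono (Icc_subset_Icc ha1 ht0.2)) isClosed_Icc Metric.isOpen_ball.isClosed_compl
    have hIoo : Ioo a t0 ⊆ Icc a t0 ∩ σ ⁻¹' ((Metric.ball c' r)ᶜ) := by
      intro t ht
      exact ⟨Ioo_subset_Icc_self ht, by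
        simp only [mem_preimage, mem_compl_iff, Metric.mem_ball, not_lt]
        exact (hgap1 t ht.1 ht.2.le).le⟩
    have hmem := closure_minimal hIoo hCclosed
    rw [closure_Ioo halt.ne] at hmem
    have := (hmem (left_mem_Icc.2 halt.le)).2
    simpa using this
  have h_eq_b : dist (σ b) c' = r := by
    refine le_antisymm hbB.2 ?_
    have hCclosed : IsClosed (Icc t0 b ∩ σ ⁻¹' ((Metric.ball c' r)ᶜ)) :=
      ContinuousOn.preimage_isClosed_of_isClosed
        (hσc.mono (Icc_subset_Icc ht0.1 hb2)) isClosed_Icc Metric.isOpen_ball.isClosed_compl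
    have hIoo : Ioo t0 b ⊆ Icc t0 b ∩ σ ⁻¹' ((Metric.ball c' r)ᶜ) := by
      intro t ht
      exact ⟨Ioo_subset_Icc_self ht, by
        simp only [mem_preimage, mem_compl_iff, Metric.mem_ball, not_lt]
        exact (hgap2 t ht.1.le ht.2).le⟩
    have hmem := closure_minimal hIoo hCclosed
    rw [closure_Ioo hbt0.ne] at hmem
    have := (hmem (right_mem_Icc.2 hbt0.le)).2
    simpa using this
  -- restricted hypotheses
  have hd' : ∀ t ∈ Icc a b, HasDerivAt σ (v t) t := fun t ht => hd t (hsub ht)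
  have hu' : ∀ t ∈ Icc a b, ‖v t‖ = 1 := fun t ht => hu t (hsub ht)
  have hcont' : ContinuousOn v (Icc a b) := hcont.mono hsub
  have hl' : ∀ s ∈ Icc a b, ∀ t ∈ Icc a b, ‖v s - v t‖ ≤ (1/r) * |s - t| :=
    fun s hs t ht => hl s (hsub hs) t (hsub ht)
  have hgb' : ∀ t ∈ Icc a b, ‖σ t - c‖ ≤ r := by
    intro t ht; rw [← dist_eq_norm]; exact hgb t ht
  -- convexity of g and strict bound inside
  have hconv_g : ConvexOn ℝ (Icc a b) (fun t => ‖σ t - c‖^2) :=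
    sq_dist_convex r a b hr σ v c hd' hu' hcont' hl' hgb'
  have hg_le : ∀ t ∈ Icc a b, ‖σ t - c‖^2 ≤ r^2 := by
    intro t ht
    have := hgb' t ht
    nlinarith [norm_nonneg (σ t - c)]
  have ht0ab : t0 ∈ Icc a b := ⟨halt.le, hbt0.le⟩
  have hg0 : ‖σ t0 - c‖^2 < r^2 := by
    rw [dist_eq_norm] at hlt
    nlinarith [norm_nonneg (σ t0 - c)]
  have hglt : ∀ t ∈ Ioo a b, ‖σ t - c‖^2 < r^2 :=
    convex_lt_inner a b (r^2) t0 _ hconv_g halt.le hbt0.le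
      (hg_le a (left_mem_Icc.2 hab.le)) (hg_le b (right_mem_Icc.2 hab.le)) hg0
  have ha_h : ‖σ a - c'‖^2 = r^2 := by rw [← dist_eq_norm, h_eq_a]
  have hb_h : ‖σ b - c'‖^2 = r^2 := by rw [← dist_eq_norm, h_eq_b]
  have hh_ub : ∀ t ∈ Icc a b, ‖σ t - c'‖^2 ≤ (r + d)^2 := by
    intro t ht
    have h1 : ‖σ t - c'‖ ≤ ‖σ t - c‖ + ‖c - c'‖ := by
      have := norm_sub_le_norm_sub_add_norm_sub (σ t) c c'
      linarith [this]
    have h2 : ‖σ t - c'‖ ≤ r + d := by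
      rw [hd_def]; linarith [hgb' t ht]
    nlinarith [norm_nonneg (σ t - c')]
  -- the interpolation family
  set U : ℝ → ℝ → ℝ := fun s t => ‖σ t - ((1-s)•c + s•c')‖^2 with hU_def
  have hU : ∀ s : ℝ, ∀ t : ℝ, U s t
      = (1-s)*‖σ t - c‖^2 + s*‖σ t - c'‖^2 - s*(1-s)*d^2 := by
    intro s t
    rw [hU_def, hd_def]
    exact comb_identity c c' (σ t) s
  have hUcont : ∀ s : ℝ, ContinuousOn (U s) (Icc a b) := by
    intro s
    apply ContinuousOn.pow
    exact ((hσc.mono hsub).sub continuousOn_const).norm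
  -- COMPACTNESS PUSH: there exists a positive s1 that works
  have push : ∃ s1 : ℝ, 0 < s1 ∧ s1 ≤ 1 ∧ ∀ t ∈ Icc a b, U s1 t ≤ r^2 := by
    have hloc : ∀ t ∈ Icc a b, ∃ ε : ℝ, 0 < ε ∧ ε ≤ 1/2 ∧ ∃ O : Set ℝ, IsOpen O ∧ t ∈ O ∧
        ∀ t' ∈ O ∩ Icc a b, ∀ s : ℝ, 0 ≤ s → s ≤ ε → U s t' ≤ r^2 := by
      intro t ht
      by_cases hta : t = a
      case pos =>
        subst hta
        -- near a : use continuity of h, h a = r^2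
        have hcw : ContinuousWithinAt (fun t => ‖σ t - c'‖^2) (Icc a b) a := by
          apply ContinuousWithinAt.pow
          exact (((hσc.mono hsub).sub continuousOn_const).norm) a ht
        have hnh : (fun t' => ‖σ t' - c'‖^2) ⁻¹' (Iio (r^2 + d^2/2)) ∈ nhdsWithin a (Icc a b) := by
          apply hcw.preimage_mem_nhdsWithin
          have : ‖σ a - c'‖^2 < r^2 + d^2/2 := by rw [ha_h]; nlinarith
          exact Iio_mem_nhds this
        obtain ⟨O, hOopen, hOa, hOsub⟩ := mem_nhdsWithin.1 hnh
        refine ⟨1/2, by norm_num, le_rfl, O, hOopen, hOa, ?_⟩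
        intro t' ht' s hs0 hs
        have hh' : ‖σ t' - c'‖^2 < r^2 + d^2/2 := hOsub ⟨ht'.1, ht'.2⟩
        have hg' : ‖σ t' - c‖^2 ≤ r^2 := hg_le t' ht'.2
        rw [hU]
        nlinarith [sq_nonneg d, mul_nonneg hs0 (sq_nonneg d)]
      case neg =>
      by_cases htb : t = b
      case pos =>
        subst htb
        have hcw : ContinuousWithinAt (fun t => ‖σ t - c'‖^2) (Icc a b) b := by
          apply ContinuousWithinAt.pow
          exact (((hσc.mono hsub).sub continuousOn_const).norm) b ht
        have hnh : (fun t' => ‖σ t' - c'‖^2) ⁻¹' (Iio (r^2 + d^2/2)) ∈ nhdsWithin b (Icc a b) := by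
          apply hcw.preimage_mem_nhdsWithin
          have : ‖σ b - c'‖^2 < r^2 + d^2/2 := by rw [hb_h]; nlinarith
          exact Iio_mem_nhds this
        obtain ⟨O, hOopen, hOb, hOsub⟩ := mem_nhdsWithin.1 hnh
        refine ⟨1/2, by norm_num, le_rfl, O, hOopen, hOb, ?_⟩
        intro t' ht' s hs0 hs
        have hh' : ‖σ t' - c'‖^2 < r^2 + d^2/2 := hOsub ⟨ht'.1, ht'.2⟩
        have hg' : ‖σ t' - c‖^2 ≤ r^2 := hg_le t' ht'.2
        rw [hU]
        nlinarith [sq_nonneg d, mul_nonneg hs0 (sq_nonneg d)]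
      case neg =>
        -- interior point : g t < r^2 strictly
        have htio : t ∈ Ioo a b :=
          ⟨lt_of_le_of_ne ht.1 (fun h => hta h.symm), lt_of_le_of_ne ht.2 htb⟩
        have hgt' : ‖σ t - c‖^2 < r^2 := hglt t htio
        set εg : ℝ := (r^2 - ‖σ t - c‖^2)/2 with hεg_def
        have hεgpos : 0 < εg := by rw [hεg_def]; linarith
        have hcw : ContinuousWithinAt (fun t => ‖σ t - c‖^2) (Icc a b) t := by
          apply ContinuousWithinAt.pow
          exact (((hσc.mono hsub).sub continuousOn_const).norm) t ht
        have hnh : (fun t' => ‖σ t' - c‖^2) ⁻¹' (Iio (r^2 - εg)) ∈ nhdsWithin t (Icc a b) := by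
          apply hcw.preimage_mem_nhdsWithin
          have : ‖σ t - c‖^2 < r^2 - εg := by rw [hεg_def]; linarith
          exact Iio_mem_nhds this
        obtain ⟨O, hOopen, hOt, hOsub⟩ := mem_nhdsWithin.1 hnh
        refine ⟨min (1/2) (εg/((r+d)^2 + εg)), ?_, min_le_left _ _, O, hOopen, hOt, ?_⟩
        · apply lt_min (by norm_num)
          apply div_pos hεgpos (by positivity)
        · intro t' ht' s hs0 hs
          have hg' : ‖σ t' - c‖^2 < r^2 - εg := hOsub ⟨ht'.1, ht'.2⟩
          have hh' : ‖σ t' - c'‖^2 ≤ (r+d)^2 := hh_ub t' ht'.2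
          have hs2 : s ≤ 1/2 := le_trans hs (min_le_left _ _)
          have hs3 : s ≤ εg/((r+d)^2 + εg) := le_trans hs (min_le_right _ _)
          have hs4 : s * ((r+d)^2 + εg) ≤ εg := by
            rw [div_eq_mul_inv] at hs3
            have hpos : (0:ℝ) < (r+d)^2 + εg := by positivity
            calc s * ((r+d)^2 + εg) ≤ (εg * ((r+d)^2 + εg)⁻¹) * ((r+d)^2 + εg) :=
                  mul_le_mul_of_nonneg_right hs3 hpos.le
              _ = εg := by field_simp
          rw [hU]
          have hgnn : (0:ℝ) ≤ ‖σ t' - c‖^2 := sq_nonneg _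
          have hhnn : (0:ℝ) ≤ ‖σ t' - c'‖^2 := sq_nonneg _
          nlinarith [mul_nonneg hs0 (sq_nonneg d), mul_le_mul_of_nonneg_left hh' hs0,
            mul_le_mul_of_nonneg_left hg'.le (by linarith : (0:ℝ) ≤ 1 - s)]
    -- extract a finite subcover
    choose ε hεpos hεhalf O hOopen hmemO hOprop using hloc
    obtain ⟨T, hT⟩ := isCompact_Icc.elim_nhds_subcover' (fun x hx => O x hx)
      (fun x hx => (hOopen x hx).mem_nhds (hmemO x hx))
    have hane : a ∈ Icc a b := left_mem_Icc.2 hab.le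
    have hTne : T.Nonempty := by
      by_contra hemp
      rw [Finset.not_nonempty_iff_eq_empty] at hemp
      have := hT hane
      simp [hemp] at this
    set s1 : ℝ := T.inf' hTne (fun x => ε x.1 x.2) with hs1_def
    refine ⟨s1, ?_, ?_, ?_⟩
    · rw [hs1_def, Finset.lt_inf'_iff]
      exact fun x _ => hεpos x.1 x.2
    · obtain ⟨x, hx⟩ := hTne
      calc s1 ≤ ε x.1 x.2 := Finset.inf'_le _ hx
        _ ≤ 1 := le_trans (hεhalf x.1 x.2) (by norm_num)
    · intro t ht
      have := hT ht
      simp only [Finset.mem_coe, mem_iUnion] at this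
      obtain ⟨x, hxT, hxO⟩ := this
      have hs1pos : 0 < s1 := by
        rw [hs1_def, Finset.lt_inf'_iff]
        exact fun y _ => hεpos y.1 y.2
      exact hOprop x.1 x.2 t ⟨hxO, ht⟩ s1 hs1pos.le (Finset.inf'_le _ hxT)
  -- the continuity/connectedness sweep : sSup of good parameters is 1
  obtain ⟨s1, hs1pos, hs11, hs1prop⟩ := push
  set SS : Set ℝ := {s | s ∈ Icc (0:ℝ) 1 ∧ ∀ t ∈ Icc a b, U s t ≤ r^2} with hSS_def
  have hSclosed : IsClosed SS := by
    have hrw : SS = Icc (0:ℝ) 1 ∩ ⋂ t ∈ Icc a b, {s | U s t ≤ r^2} := by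
      ext s
      simp only [hSS_def, mem_setOf_eq, mem_inter_iff, mem_iInter]
    rw [hrw]
    refine isClosed_Icc.inter (isClosed_biInter ?_)
    intro t ht
    apply isClosed_le _ continuous_const
    rw [hU_def]
    fun_prop
  have hSne : SS.Nonempty := ⟨s1, ⟨hs1pos.le, hs11⟩, hs1prop⟩
  have hSbdd : BddAbove SS := ⟨1, fun s hs => hs.1.2⟩
  set sm : ℝ := sSup SS with hsm_def
  have hsmS : sm ∈ SS := hSclosed.csSup_mem hSne hSbdd
  have hsm_pos : 0 < sm :=
    lt_of_lt_of_le hs1pos (le_csSup hSbdd ⟨⟨hs1pos.le, hs11⟩, hs1prop⟩)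
  have hsm1 : sm ≤ 1 := hsmS.1.2
  rcases eq_or_lt_of_le hsm1 with heq | hlt1
  · -- sm = 1 gives the final contradiction at t0
    have hfin := hsmS.2 t0 ht0ab
    rw [hU, heq] at hfin
    have hgt' : r^2 < ‖σ t0 - c'‖^2 := by
      rw [dist_eq_norm] at hgt
      nlinarith [hgt, hr]
    nlinarith [hfin, hgt']
  · -- 0 < sm < 1 : the convexity gap pushes sm further, contradiction
    have hball : ∀ t ∈ Icc a b, ‖σ t - ((1-sm)•c + sm•c')‖ ≤ r := by
      intro t ht
      have h2 : ‖σ t - ((1-sm)•c + sm•c')‖^2 ≤ r^2 := hsmS.2 t ht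
      nlinarith [norm_nonneg (σ t - ((1-sm)•c + sm•c')), hr]
    have hconvU : ConvexOn ℝ (Icc a b) (U sm) :=
      sq_dist_convex r a b hr σ v ((1-sm)•c + sm•c') hd' hu' hcont' hl' hball
    set gap : ℝ := sm*(1-sm)*d^2 with hgap_def
    have hgap_pos : 0 < gap := by
      rw [hgap_def]
      exact mul_pos (mul_pos hsm_pos (by linarith)) (by positivity)
    have hUa : U sm a ≤ r^2 - gap := by
      rw [hU, hgap_def]
      have h1 : ‖σ a - c‖^2 ≤ r^2 := hg_le a (left_mem_Icc.2 hab.le)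
      nlinarith [ha_h, hsm_pos, hlt1]
    have hUb : U sm b ≤ r^2 - gap := by
      rw [hU, hgap_def]
      have h1 : ‖σ b - c‖^2 ≤ r^2 := hg_le b (right_mem_Icc.2 hab.le)
      nlinarith [hb_h, hsm_pos, hlt1]
    have hUmax : ∀ t ∈ Icc a b, U sm t ≤ r^2 - gap :=
      convex_le_max a b _ (U sm) hconvU hab.le hUa hUb
    set K : ℝ := (r+d)^2 + d^2 + 1 with hK_def
    have hKpos : 0 < K := by positivity
    set s' : ℝ := min 1 (sm + gap/K) with hs'_def
    have hs'gt : sm < s' := lt_min hlt1 (by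
      have : 0 < gap/K := div_pos hgap_pos hKpos
      linarith)
    have hs'mem : s' ∈ SS := by
      refine ⟨⟨le_trans hsm_pos.le hs'gt.le, min_le_left _ _⟩, ?_⟩
      intro t ht
      have hident : U s' t = U sm t + (s'-sm)*(‖σ t - c'‖^2 - ‖σ t - c‖^2)
          - (s'-sm)*(1-s'-sm)*d^2 := by rw [hU, hU]; ring
      have he0 : 0 ≤ s' - sm := by linarith
      have he1' : s' - sm ≤ gap/K := by
        have := min_le_right 1 (sm + gap/K)
        rw [← hs'_def] at this
        linarith
      have hfrac : 0 ≤ gap/K := le_trans he0 he1'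
      have hb1 : (s'-sm)*(‖σ t - c'‖^2 - ‖σ t - c‖^2) ≤ (s'-sm)*(r+d)^2 := by
        apply mul_le_mul_of_nonneg_left _ he0
        nlinarith [hh_ub t ht, sq_nonneg ‖σ t - c‖]
      have hb2 : -((s'-sm)*(1-s'-sm)*d^2) ≤ (s'-sm)*d^2 := by
        have hs'le1 : s' ≤ 1 := min_le_left _ _
        have hss : s' + sm - 1 ≤ 1 := by linarith
        calc -((s'-sm)*(1-s'-sm)*d^2) = ((s'-sm)*(s'+sm-1))*d^2 := by ring
          _ ≤ ((s'-sm)*1)*d^2 :=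
              mul_le_mul_of_nonneg_right (mul_le_mul_of_nonneg_left hss he0) (sq_nonneg d)
          _ = (s'-sm)*d^2 := by ring
      have hKe : (s'-sm)*((r+d)^2 + d^2) ≤ gap := by
        calc (s'-sm)*((r+d)^2 + d^2) ≤ (gap/K)*((r+d)^2 + d^2) :=
              mul_le_mul_of_nonneg_right he1' (by positivity)
          _ ≤ (gap/K)*K := mul_le_mul_of_nonneg_left (by rw [hK_def]; linarith) hfrac
          _ = gap := by field_simp
      have hum := hUmax t ht
      linarith [hident, hb1, hb2, hKe, hum]
    exact absurd (le_csSup hSbdd hs'mem) (not_le.2 hs'gt)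


/-- **Rigidity.** A unit-speed `κ`-constrained curve (`‖σ''‖ ≤ 1/r`, encoded by a
`(1/r)`-Lipschitz unit tangent `v`) whose endpoints are at distance `< 2r`, lying in the
union `D1 ∪ D2` of the two radius-`r` closed disks through its endpoints, has no point in
`int(D1 ∪ D2) \ cl(D1 ∩ D2)`. -/
theorem lens_rigidity (r t1 t2 : ℝ) (hr : 0 < r) (ht : t1 ≤ t2)
    (σ v : ℝ → EuclideanSpace ℝ (Fin 2))
    (hderiv : ∀ t ∈ Set.Icc t1 t2, HasDerivAt σ (v t) t)
    (hunit : ∀ t ∈ Set.Icc t1 t2, ‖v t‖ = 1)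
    (hcont : ContinuousOn v (Set.Icc t1 t2))
    (hlip : ∀ s ∈ Set.Icc t1 t2, ∀ t ∈ Set.Icc t1 t2, ‖v s - v t‖ ≤ (1 / r) * |s - t|)
    (hdist : dist (σ t1) (σ t2) < 2 * r)
    (c1 c2 : EuclideanSpace ℝ (Fin 2)) (hc12 : c1 ≠ c2)
    (hc1 : dist (σ t1) c1 = r ∧ dist (σ t2) c1 = r)
    (hc2 : dist (σ t1) c2 = r ∧ dist (σ t2) c2 = r)
    (hin : ∀ t ∈ Set.Icc t1 t2,
      σ t ∈ Metric.closedBall c1 r ∪ Metric.closedBall c2 r) :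
    ∀ t ∈ Set.Icc t1 t2,
      σ t ∉ interior (Metric.closedBall c1 r ∪ Metric.closedBall c2 r) \
            closure (Metric.closedBall c1 r ∩ Metric.closedBall c2 r) := by
  intro t htmem hbad
  obtain ⟨hI, hC⟩ := hbad
  have hnotin : σ t ∉ Metric.closedBall c1 r ∩ Metric.closedBall c2 r :=
    fun h => hC (subset_closure h)
  have hint : ∀ cA cB : EuclideanSpace ℝ (Fin 2),
      Metric.closedBall c1 r ∪ Metric.closedBall c2 r
        = Metric.closedBall cA r ∪ Metric.closedBall cB r →
      σ t ∈ Metric.closedBall cA r → σ t ∉ Metric.closedBall cB r →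
      dist (σ t) cA < r := by
    intro cA cB hU hA hB
    have h1 : Metric.closedBall cA r ∪ Metric.closedBall cB r ∈ nhds (σ t) := by
      rw [← hU]
      exact mem_interior_iff_mem_nhds.1 hI
    have h2 : (Metric.closedBall cB r)ᶜ ∈ nhds (σ t) :=
      Metric.isClosed_closedBall.isOpen_compl.mem_nhds hB
    have h3 : Metric.closedBall cA r ∈ nhds (σ t) := by
      filter_upwards [h1, h2] with x hx1 hx2
      rcases hx1 with h | h
      · exact h
      · exact absurd h hx2
    have h4 : σ t ∈ interior (Metric.closedBall cA r) := mem_interior_iff_mem_nhds.2 h3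
    rw [interior_closedBall cA hr.ne'] at h4
    exact mem_ball.1 h4
  rcases hin t htmem with hmem1 | hmem2
  · -- σ t ∈ D1, hence σ t ∉ D2
    have hB : σ t ∉ Metric.closedBall c2 r := fun h => hnotin ⟨hmem1, h⟩
    have hltA : dist (σ t) c1 < r := hint c1 c2 rfl hmem1 hB
    have hgtB : r < dist (σ t) c2 := lt_of_not_ge (fun h => hB (mem_closedBall.2 h))
    exact core_lemma hr σ v hc12 hderiv hunit hcont hlip
      (le_of_eq hc2.1) (le_of_eq hc2.2) hin htmem hltA hgtB
  · have hB : σ t ∉ Metric.closedBall c1 r := fun h => hnotin ⟨h, hmem2⟩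
    have hltA : dist (σ t) c2 < r := hint c2 c1 (union_comm _ _) hmem2 hB
    have hgtB : r < dist (σ t) c1 := lt_of_not_ge (fun h => hB (mem_closedBall.2 h))
    have hin' : ∀ u ∈ Set.Icc t1 t2,
        σ u ∈ Metric.closedBall c2 r ∪ Metric.closedBall c1 r := by
      intro u hu
      rw [union_comm]
      exact hin u hu
    exact core_lemma hr σ v (Ne.symm hc12) hderiv hunit hcont hlip
      (le_of_eq hc1.1) (le_of_eq hc1.2) hin' htmem hltA hgtB
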